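/- For every positive integer k, there exists a connected graph with metric dimension at most k containing the star K_{1,n} as a subgraph with n ≥ 3^k - k - 1. -/

import Mathlib

open SimpleGraph Finset

/-- Distance from an edge (as an unordered pair) to a vertex: the minimum
of the distances from the two endpoints. -/
noncomputable def edgeVertexDist {V : Type*} (G : SimpleGraph V) (e : Sym2 V) (v : V) : ℕ :=
  Sym2.lift ⟨fun x y => min (G.dist x v) (G.dist y v), fun x y => by
    simp [min_comm]⟩ e

/-- `S` is a resolving set for the vertices of `G`. -/
def IsResolvingSet {V : Type*} (G : SimpleGraph V) (S : Set V) : Prop :=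
  ∀ u w : V, (∀ s ∈ S, G.dist u s = G.dist w s) → u = w

/-- `S` is a resolving set for the edges of `G`. -/
def IsEdgeResolvingSet {V : Type*} (G : SimpleGraph V) (S : Set V) : Prop :=
  ∀ e ∈ G.edgeSet, ∀ f ∈ G.edgeSet,
    (∀ s ∈ S, edgeVertexDist G e s = edgeVertexDist G f s) → e = f

/-- The metric dimension of `G`. -/
noncomputable def metricDim {V : Type*} (G : SimpleGraph V) : ℕ :=
  sInf {k | ∃ S : Finset V, S.card = k ∧ IsResolvingSet G (S : Set V)}

/-- The edge metric dimension of `G`. -/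
noncomputable def edgeMetricDim {V : Type*} (G : SimpleGraph V) : ℕ :=
  sInf {k | ∃ S : Finset V, S.card = k ∧ IsEdgeResolvingSet G (S : Set V)}

namespace Stmt8Aux

def ones (k : ℕ) : Fin k → Fin 3 := fun _ => 1

def zvec (k : ℕ) (i : Fin k) : Fin k → Fin 3 := fun j => if j = i then 0 else 1

def Good (k : ℕ) (x : Fin k → Fin 3) : Prop := x ≠ ones k ∧ ∀ i, x ≠ zvec k i

instance (k : ℕ) (x : Fin k → Fin 3) : Decidable (Good k x) := by
  unfold Good; infer_instance

inductive Vtx (k : ℕ) : Type where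
  | c : Vtx k
  | s (i : Fin k) : Vtx k
  | r (i : Fin k) : Vtx k
  | leaf (x : {x : Fin k → Fin 3 // Good k x}) : Vtx k
  deriving DecidableEq, Fintype

open Vtx

def adj (k : ℕ) : Vtx k → Vtx k → Prop
  | .c, .leaf _ => True
  | .leaf _, .c => True
  | .s i, .r j => i = j
  | .r i, .s j => i = j
  | .r i, .r j => i ≠ j
  | .s i, .leaf x => x.1 i = 0
  | .leaf x, .s i => x.1 i = 0
  | .r i, .leaf x => x.1 i = 1
  | .leaf x, .r i => x.1 i = 1
  | _, _ => False

def G (k : ℕ) : SimpleGraph (Vtx k) where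
  Adj := adj k
  symm := by
    constructor
    intro a b h
    cases a <;> cases b <;> simp_all [adj] <;> omega
  loopless := by
    constructor
    intro a
    cases a <;> simp [adj]

@[simp] lemma G_adj {k : ℕ} (u v : Vtx k) : (G k).Adj u v ↔ adj k u v := Iff.rfl

lemma good_zero {k : ℕ} (hk : 2 ≤ k) : Good k (fun _ => 0) := by
  constructor
  · intro h
    have := congrFun h ⟨0, by omega⟩
    simp [ones] at this
  · intro i h
    have h2 : ∃ j : Fin k, j ≠ i := by
      rcases i with ⟨iv, hi⟩
      by_cases h0 : iv = 0
      · exact ⟨⟨1, by omega⟩, by simp [Fin.ext_iff, h0]⟩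
      · exact ⟨⟨0, by omega⟩, by simp [Fin.ext_iff]; omega⟩
    obtain ⟨j, hj⟩ := h2
    have := congrFun h j
    simp [zvec, hj] at this

def lzero (k : ℕ) (hk : 2 ≤ k) : Vtx k := .leaf ⟨fun _ => 0, good_zero hk⟩


lemma dist_eq_two {V : Type*} {G : SimpleGraph V} {u v w : V} (hne : u ≠ v)
    (hna : ¬ G.Adj u v) (h1 : G.Adj u w) (h2 : G.Adj w v) : G.dist u v = 2 := by
  have hle : G.dist u v ≤ 2 := by
    have h := SimpleGraph.dist_le (Walk.cons h1 (Walk.cons h2 Walk.nil))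
    simpa using h
  have hr : G.Reachable u v := ⟨Walk.cons h1 (Walk.cons h2 Walk.nil)⟩
  have h0 : G.dist u v ≠ 0 := fun h => hne (hr.dist_eq_zero_iff.mp h)
  have h1' : G.dist u v ≠ 1 := fun h => hna (SimpleGraph.dist_eq_one_iff_adj.mp h)
  omega

lemma dist_eq_three {V : Type*} {G : SimpleGraph V} {u v : V} (hne : u ≠ v)
    (hna : ¬ G.Adj u v) (hnc : ∀ w, G.Adj u w → G.Adj w v → False)
    (p : G.Walk u v) (hp : p.length = 3) : G.dist u v = 3 := by
  have hle : G.dist u v ≤ 3 := hp ▸ SimpleGraph.dist_le p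
  have hr : G.Reachable u v := ⟨p⟩
  have h0 : G.dist u v ≠ 0 := fun h => hne (hr.dist_eq_zero_iff.mp h)
  have h1' : G.dist u v ≠ 1 := fun h => hna (SimpleGraph.dist_eq_one_iff_adj.mp h)
  have h2' : G.dist u v ≠ 2 := by
    intro h2
    obtain ⟨q, hq⟩ := hr.exists_walk_length_eq_dist
    rw [h2] at hq
    cases q with
    | nil => simp at hq
    | cons ha q' =>
      cases q' with
      | nil => simp at hq
      | cons hb q'' =>
        simp [Walk.length_cons] at hq
        have := Walk.Nil.eq hq
        subst this
        exact hnc _ ha hb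
  omega

/-- the target distance vector -/
def vec (k : ℕ) : Vtx k → Fin k → ℕ
  | .c, _ => 2
  | .s j, i => if j = i then 0 else 2
  | .r j, i => if j = i then 1 else 2
  | .leaf x, i => (x.1 i : ℕ) + 1

lemma dist_s {k : ℕ} (hk : 2 ≤ k) (u : Vtx k) (i : Fin k) :
    (G k).dist u (.s i) = vec k u i := by
  have hadj0 : (G k).Adj (lzero k hk) (.s i) := by simp [lzero, adj]
  have hadjc0 : (G k).Adj .c (lzero k hk) := by simp [lzero, adj]
  cases u with
  | c =>
    exact dist_eq_two (by simp) (by simp [adj]) hadjc0 hadj0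
  | s j =>
    by_cases h : j = i
    · subst h; simp [vec, SimpleGraph.dist_self]
    · have : (G k).Adj (.s j) (lzero k hk) := by simp [lzero, adj]
      rw [dist_eq_two (by simp [h]) (by simp [adj]) this hadj0]
      simp [vec, h]
  | r j =>
    by_cases h : j = i
    · subst h
      rw [SimpleGraph.dist_eq_one_iff_adj.mpr (by simp [adj])]
      simp [vec]
    · have h1 : (G k).Adj (.r j) (.r i) := by simp [adj, h]
      have h2 : (G k).Adj (.r i) (.s i) := by simp [adj]
      rw [dist_eq_two (by simp) (by simp [adj, h]) h1 h2]
      simp [vec, h]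
  | leaf x =>
    rcases x with ⟨x, hx⟩
    have h3 : (x i : ℕ) < 3 := (x i).2
    have h3' : (x i : ℕ) = 0 ∨ (x i : ℕ) = 1 ∨ (x i : ℕ) = 2 := by omega
    rcases h3' with h | h | h
    · -- digit 0 : adjacent
      have : x i = 0 := Fin.ext h
      rw [SimpleGraph.dist_eq_one_iff_adj.mpr (by simp [adj, this])]
      simp [vec, h]
    · -- digit 1 : via r i
      have hx1 : x i = 1 := Fin.ext h
      have h1 : (G k).Adj (.leaf ⟨x, hx⟩) (.r i) := by simp [adj, hx1]
      have h2 : (G k).Adj (.r i) (.s i) := by simp [adj]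
      rw [dist_eq_two (by simp) (by simp [adj, hx1]) h1 h2]
      simp [vec, h]
    · -- digit 2 : distance three
      have hx2 : x i = 2 := Fin.ext h
      have hna : ¬ (G k).Adj (.leaf ⟨x, hx⟩) (.s i) := by simp [adj, hx2]
      have hnc : ∀ w, (G k).Adj (.leaf ⟨x, hx⟩) w → (G k).Adj w (.s i) → False := by
        intro w hw1 hw2
        cases w with
        | c => simp [adj] at hw2
        | s j => simp [adj] at hw2
        | r j =>
          simp [adj] at hw1 hw2
          subst hw2
          rw [hx2] at hw1
          exact absurd hw1 (by decide)
        | leaf y => simp [adj] at hw1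
      have hc : (G k).Adj (.leaf ⟨x, hx⟩) .c := by simp [adj]
      rw [dist_eq_three (by simp) hna hnc
        (Walk.cons hc (Walk.cons hadjc0 (Walk.cons hadj0 Walk.nil))) (by simp)]
      simp [vec, h]

lemma vec_inj {k : ℕ} (u w : Vtx k) (h : ∀ i, vec k u i = vec k w i) : u = w := by
  have leaf_ones : ∀ (y : {x : Fin k → Fin 3 // Good k x}),
      (∀ i, (y.1 i : ℕ) + 1 = 2) → False := by
    intro y hy
    apply y.2.1
    funext j
    have hv : (y.1 j : ℕ) = 1 := by have := hy j; omega
    have : y.1 j = 1 := Fin.ext (by simp [hv])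
    simpa [ones] using this
  have leaf_z : ∀ (y : {x : Fin k → Fin 3 // Good k x}) (j : Fin k),
      (∀ i, (y.1 i : ℕ) + 1 = if j = i then 1 else 2) → False := by
    intro y j hy
    apply y.2.2 j
    funext m
    have hm := hy m
    simp only [zvec]
    by_cases e : j = m
    · rw [if_pos e] at hm
      rw [if_pos e.symm]
      have hv : (y.1 m : ℕ) = 0 := by omega
      exact Fin.ext (by simp [hv])
    · rw [if_neg e] at hm
      rw [if_neg (fun e' => e e'.symm)]
      have hv : (y.1 m : ℕ) = 1 := by omega
      exact Fin.ext (by simp [hv])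
  cases u with
  | c =>
    cases w with
    | c => rfl
    | s j => exfalso; have := h j; simp [vec] at this
    | r j => exfalso; have := h j; simp [vec] at this
    | leaf y => exact absurd (fun i => (h i).symm) (fun hy => leaf_ones y hy)
  | s j =>
    cases w with
    | c => exfalso; have := h j; simp [vec] at this
    | s j' =>
      by_cases hjj : j' = j
      · rw [hjj]
      · exfalso; have := h j; simp [vec, hjj] at this
    | r j' =>
      exfalso; have := h j
      by_cases hjj : j' = j <;> simp [vec, hjj] at this
    | leaf y =>
      exfalso; have := h j; simp [vec] at this
  | r j =>
    cases w with
    | c => exfalso; have := h j; simp [vec] at this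
    | s j' =>
      exfalso; have := h j
      by_cases hjj : j' = j <;> simp [vec, hjj] at this
    | r j' =>
      by_cases hjj : j' = j
      · rw [hjj]
      · exfalso; have := h j; simp [vec, hjj] at this
    | leaf y => exact absurd (fun i => (h i).symm) (fun hy => leaf_z y j hy)
  | leaf x =>
    cases w with
    | c => exact absurd (fun i => h i) (fun hy => leaf_ones x hy)
    | s j => exfalso; have := h j; simp [vec] at this
    | r j => exact absurd (fun i => h i) (fun hy => leaf_z x j hy)
    | leaf y =>
      congr 1
      apply Subtype.ext
      funext m
      have hm := h m
      simp only [vec] at hm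
      exact Fin.ext (by omega)

lemma connected {k : ℕ} (hk : 2 ≤ k) : (G k).Connected := by
  rw [connected_iff_exists_forall_reachable]
  refine ⟨.c, fun u => ?_⟩
  have h0c : (G k).Reachable .c (lzero k hk) :=
    ((by simp [lzero, adj] : (G k).Adj .c (lzero k hk))).reachable
  cases u with
  | c => rfl
  | s i =>
    exact h0c.trans ((by simp [lzero, adj] : (G k).Adj (lzero k hk) (.s i))).reachable
  | r i =>
    refine (h0c.trans ((by simp [lzero, adj] : (G k).Adj (lzero k hk) (.s i))).reachable).trans ?_
    exact ((by simp [adj] : (G k).Adj (.s i) (.r i))).reachable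
  | leaf x => exact ((by simp [adj] : (G k).Adj .c (.leaf x))).reachable

lemma card_good {k : ℕ} : 3 ^ k - (k + 1) ≤ Fintype.card {x : Fin k → Fin 3 // Good k x} := by
  classical
  have h1 : Fintype.card {x : Fin k → Fin 3 // Good k x}
      = (Finset.univ.filter (Good k)).card := Fintype.card_subtype _
  have h2 : (Finset.univ.filter (Good k)).card
      + (Finset.univ.filter (fun x => ¬ Good k x)).card
      = Fintype.card (Fin k → Fin 3) := by
    rw [Finset.card_filter_add_card_filter_not, Finset.card_univ]
  have h3 : (Finset.univ.filter (fun x => ¬ Good k x))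
      ⊆ insert (ones k) (Finset.univ.image (zvec k)) := by
    intro x hx
    simp only [Finset.mem_filter, Good, not_and, not_forall, not_not] at hx
    by_cases hone : x = ones k
    · simp [hone]
    · obtain ⟨i, hi⟩ := hx.2 hone
      simp only [Finset.mem_insert, Finset.mem_image]
      exact Or.inr ⟨i, Finset.mem_univ i, hi.symm⟩
  have h4 : (insert (ones k) (Finset.univ.image (zvec k))).card ≤ k + 1 := by
    refine le_trans (Finset.card_insert_le _ _) ?_
    have := Finset.card_image_le (f := zvec k) (s := Finset.univ)
    simp only [Finset.card_univ, Fintype.card_fin] at this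
    omega
  have h5 : Fintype.card (Fin k → Fin 3) = 3 ^ k := by simp
  have h6 := Finset.card_le_card h3
  omega

end Stmt8Aux

/-- For every `k ≥ 1` there is a connected graph with metric dimension at most `k`
containing a star `K_{1,n}` with `n ≥ 3^k - k - 1`. -/
theorem stmt_8 (k : ℕ) (hk : 1 ≤ k) :
    ∃ (V : Type) (_ : Fintype V) (G : SimpleGraph V),
      G.Connected ∧ metricDim G ≤ k ∧
        ∃ (c : V) (L : Finset V), 3 ^ k - k - 1 ≤ L.card ∧ c ∉ L ∧
          ∀ v ∈ L, G.Adj c v := by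
  classical
  rcases Nat.lt_or_ge k 2 with hk2 | hk2
  · -- k = 1 : use the complete graph on `Bool`
    have hk1 : k = 1 := by omega
    subst hk1
    refine ⟨Bool, inferInstance, ⊤, SimpleGraph.connected_top, ?_, true, {false}, by simp,
      by simp, by simp⟩
    have hmem : 1 ∈ {n | ∃ S : Finset Bool, S.card = n ∧
        IsResolvingSet (⊤ : SimpleGraph Bool) (S : Set Bool)} := by
      refine ⟨{true}, by simp, ?_⟩
      intro u w h
      have h1 := h true (by simp)
      have dft : (⊤ : SimpleGraph Bool).dist false true = 1 :=
        SimpleGraph.dist_eq_one_iff_adj.mpr (by simp)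
      have dtt : (⊤ : SimpleGraph Bool).dist true true = 0 := SimpleGraph.dist_self
      cases u <;> cases w
      · rfl
      · rw [dft, dtt] at h1; exact absurd h1 one_ne_zero
      · rw [dtt, dft] at h1; exact absurd h1 zero_ne_one
      · rfl
    exact Nat.sInf_le hmem
  · -- k ≥ 2 : the ternary construction
    refine ⟨Stmt8Aux.Vtx k, inferInstance, Stmt8Aux.G k, Stmt8Aux.connected hk2, ?_, .c,
      Finset.univ.image (fun x : {x : Fin k → Fin 3 // Stmt8Aux.Good k x} => Stmt8Aux.Vtx.leaf x),
      ?_, ?_, ?_⟩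
    · -- metric dimension at most k
      have hmem : k ∈ {n | ∃ S : Finset (Stmt8Aux.Vtx k), S.card = n ∧
          IsResolvingSet (Stmt8Aux.G k) (S : Set (Stmt8Aux.Vtx k))} := by
        refine ⟨Finset.univ.image Stmt8Aux.Vtx.s, ?_, ?_⟩
        · rw [Finset.card_image_of_injective _ (fun a b hab => by simpa using hab)]
          simp
        · intro u w h
          apply Stmt8Aux.vec_inj
          intro i
          rw [← Stmt8Aux.dist_s hk2 u i, ← Stmt8Aux.dist_s hk2 w i]
          exact h (Stmt8Aux.Vtx.s i) (by simp)
      exact Nat.sInf_le hmem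
    · -- enough leaves
      rw [Finset.card_image_of_injective _ (fun a b hab => by simpa using hab)]
      have := Stmt8Aux.card_good (k := k)
      simp only [Finset.card_univ]
      omega
    · simp
    · intro v hv
      simp only [Finset.mem_image] at hv
      obtain ⟨x, -, rfl⟩ := hv
      simp [Stmt8Aux.adj]
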